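/- arXiv:2411.19729 — 3 statements merged into one kernel-verified Lean document; each statement's English description precedes it below -/
import Mathlib

section
/- Let h : ℝ^n → ℝ be L₀-Lipschitz and let α ∈ (0,1]. For any two probability measures 𝒟₁ and 𝒟₂ on ℝ^n with finite first moments, the Conditional Value at Risk of h at level α satisfies |CVaR_α(h_*𝒟₁) − CVaR_α(h_*𝒟₂)| ≤ (L₀/α) · W₁(𝒟₁, 𝒟₂), where h_*𝒟 denotes the pushforward of 𝒟 under h. -/
open MeasureTheory

/-- Conditional Value at Risk at level `α` of a real-valued distribution `μ`:
`CVaR_α(μ) = inf_t ( t + (1/α) ∫ max(z − t, 0) dμ(z) )`. -/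
noncomputable def CVaR (α : ℝ) (μ : Measure ℝ) : ℝ :=
  ⨅ t : ℝ, (t + (1 / α) * ∫ z, max (z - t) 0 ∂μ)

/-- Type-1 Wasserstein distance on `ℝ^n`: infimum over couplings `π` of
`∫ ‖x − y‖ dπ(x,y)`. -/
noncomputable def W1 {n : ℕ} (μ ν : Measure (EuclideanSpace ℝ (Fin n))) : ℝ :=
  sInf {r : ℝ |
    ∃ π : Measure (EuclideanSpace ℝ (Fin n) × EuclideanSpace ℝ (Fin n)),
      IsProbabilityMeasure π ∧ π.map Prod.fst = μ ∧ π.map Prod.snd = ν ∧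
      r = ∫ p, ‖p.1 - p.2‖ ∂π}

section Aux
variable {n : ℕ}
local notation "E" => EuclideanSpace ℝ (Fin n)

lemma abs_bound (L₀ : ℝ) (h : E → ℝ)
    (hLip : ∀ x y : E, |h x - h y| ≤ L₀ * ‖x - y‖) (x : E) :
    |h x| ≤ |h 0| + L₀ * ‖x‖ := by
  have h1 := hLip x 0
  rw [sub_zero] at h1
  calc |h x| = |(h x - h 0) + h 0| := by ring_nf
    _ ≤ |h x - h 0| + |h 0| := abs_add_le _ _
    _ ≤ L₀ * ‖x‖ + |h 0| := by linarith
    _ = |h 0| + L₀ * ‖x‖ := by ring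

lemma integrable_max (L₀ : ℝ) (h : E → ℝ) (hmeas : Measurable h)
    (hLip : ∀ x y : E, |h x - h y| ≤ L₀ * ‖x - y‖)
    (μ : Measure E) [IsProbabilityMeasure μ]
    (hμ : Integrable (fun x => ‖x‖) μ) (t : ℝ) :
    Integrable (fun x => max (h x - t) 0) μ := by
  apply Integrable.mono' (g := fun x => |h 0| + L₀ * ‖x‖ + |t|)
  · exact ((integrable_const (|h 0|)).add (hμ.const_mul L₀)).add (integrable_const |t|)
  · exact ((hmeas.sub_const t).max measurable_const).aestronglyMeasurable
  · filter_upwards with x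
    have hb := abs_bound L₀ h hLip x
    have : |max (h x - t) 0| ≤ |h x| + |t| := by
      rw [abs_of_nonneg (le_max_right _ _)]
      rcases le_total (h x - t) 0 with h' | h'
      · simp [max_eq_right h']; positivity
      · rw [max_eq_left h']
        calc h x - t ≤ |h x - t| := le_abs_self _
          _ ≤ |h x| + |t| := abs_sub _ _
    calc ‖max (h x - t) 0‖ = |max (h x - t) 0| := rfl
      _ ≤ |h x| + |t| := this
      _ ≤ |h 0| + L₀ * ‖x‖ + |t| := by linarith

lemma integrable_h (L₀ : ℝ) (h : E → ℝ) (hmeas : Measurable h)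
    (hLip : ∀ x y : E, |h x - h y| ≤ L₀ * ‖x - y‖)
    (μ : Measure E) [IsProbabilityMeasure μ]
    (hμ : Integrable (fun x => ‖x‖) μ) :
    Integrable h μ := by
  apply Integrable.mono' (g := fun x => |h 0| + L₀ * ‖x‖)
  · exact (integrable_const (|h 0|)).add (hμ.const_mul L₀)
  · exact hmeas.aestronglyMeasurable
  · filter_upwards with x; exact abs_bound L₀ h hLip x

/-- Lower bound for the CVaR objective: it is at least the mean of `h`. -/
lemma bddBelow_obj (L₀ α : ℝ) (hα : 0 < α) (hα1 : α ≤ 1)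
    (h : E → ℝ) (hmeas : Measurable h)
    (hLip : ∀ x y : E, |h x - h y| ≤ L₀ * ‖x - y‖)
    (μ : Measure E) [IsProbabilityMeasure μ]
    (hμ : Integrable (fun x => ‖x‖) μ) (t : ℝ) :
    ∫ x, h x ∂μ ≤ t + (1 / α) * ∫ x, max (h x - t) 0 ∂μ := by
  have hImax := integrable_max L₀ h hmeas hLip μ hμ t
  have hIh := integrable_h L₀ h hmeas hLip μ hμ
  have h0 : 0 ≤ ∫ x, max (h x - t) 0 ∂μ :=
    integral_nonneg fun x => le_max_right _ _
  have h1 : (1 : ℝ) ≤ 1 / α := by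
    rw [le_div_iff₀ hα]; linarith
  have h2 : ∫ x, (h x - t) ∂μ ≤ ∫ x, max (h x - t) 0 ∂μ :=
    integral_mono (hIh.sub (integrable_const t)) hImax fun x => le_max_left _ _
  have h3 : ∫ x, (h x - t) ∂μ = (∫ x, h x ∂μ) - t := by
    rw [integral_sub hIh (integrable_const t), integral_const]
    simp
  nlinarith [mul_le_mul_of_nonneg_right h1 h0]

lemma cvar_pushforward (L₀ α : ℝ) (hα : 0 < α)
    (h : E → ℝ) (hmeas : Measurable h)
    (hLip : ∀ x y : E, |h x - h y| ≤ L₀ * ‖x - y‖)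
    (μ : Measure E) [IsProbabilityMeasure μ]
    (hμ : Integrable (fun x => ‖x‖) μ) :
    CVaR α (μ.map h) = ⨅ t : ℝ, (t + (1 / α) * ∫ x, max (h x - t) 0 ∂μ) := by
  unfold CVaR
  congr 1
  ext t
  congr 1
  congr 1
  exact integral_map hmeas.aemeasurable
    (((measurable_id.sub_const t).max measurable_const).aestronglyMeasurable)

/-- One-sided key estimate using a coupling. -/
lemma cvar_coupling_le (L₀ α : ℝ) (hL0 : 0 ≤ L₀) (hα : 0 < α) (hα1 : α ≤ 1)
    (h : E → ℝ) (hmeas : Measurable h)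
    (hLip : ∀ x y : E, |h x - h y| ≤ L₀ * ‖x - y‖)
    (μ₁ μ₂ : Measure E) [IsProbabilityMeasure μ₁] [IsProbabilityMeasure μ₂]
    (hμ₁ : Integrable (fun x => ‖x‖) μ₁) (hμ₂ : Integrable (fun x => ‖x‖) μ₂)
    (π : Measure (E × E)) [IsProbabilityMeasure π]
    (hπ₁ : π.map Prod.fst = μ₁) (hπ₂ : π.map Prod.snd = μ₂) :
    CVaR α (μ₁.map h) ≤ CVaR α (μ₂.map h) + (L₀ / α) * ∫ p, ‖p.1 - p.2‖ ∂π := by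
  have key : ∀ t : ℝ,
      (t + (1 / α) * ∫ x, max (h x - t) 0 ∂μ₁) ≤
      (t + (1 / α) * ∫ x, max (h x - t) 0 ∂μ₂) + (L₀ / α) * ∫ p, ‖p.1 - p.2‖ ∂π := by
    intro t
    -- integrals via the coupling
    have e₁ : ∫ x, max (h x - t) 0 ∂μ₁ = ∫ p : E × E, max (h p.1 - t) 0 ∂π := by
      rw [← hπ₁, integral_map measurable_fst.aemeasurable]
      rw [hπ₁]
      exact ((hmeas.sub_const t).max measurable_const).aestronglyMeasurable
    have e₂ : ∫ x, max (h x - t) 0 ∂μ₂ = ∫ p : E × E, max (h p.2 - t) 0 ∂π := by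
      rw [← hπ₂, integral_map measurable_snd.aemeasurable]
      rw [hπ₂]
      exact ((hmeas.sub_const t).max measurable_const).aestronglyMeasurable
    have iπ₁ : Integrable (fun p : E × E => max (h p.1 - t) 0) π := by
      have := integrable_max L₀ h hmeas hLip μ₁ hμ₁ t
      rw [← hπ₁] at this
      exact (integrable_map_measure
        (by rw [hπ₁]; exact ((hmeas.sub_const t).max measurable_const).aestronglyMeasurable)
        measurable_fst.aemeasurable).mp this
    have iπ₂ : Integrable (fun p : E × E => max (h p.2 - t) 0) π := by
      have := integrable_max L₀ h hmeas hLip μ₂ hμ₂ t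
      rw [← hπ₂] at this
      exact (integrable_map_measure
        (by rw [hπ₂]; exact ((hmeas.sub_const t).max measurable_const).aestronglyMeasurable)
        measurable_snd.aemeasurable).mp this
    have inorm₁ : Integrable (fun p : E × E => ‖p.1‖) π := by
      rw [← hπ₁] at hμ₁
      exact (integrable_map_measure
        (by rw [hπ₁]; exact measurable_norm.aestronglyMeasurable)
        measurable_fst.aemeasurable).mp hμ₁
    have inorm₂ : Integrable (fun p : E × E => ‖p.2‖) π := by
      rw [← hπ₂] at hμ₂
      exact (integrable_map_measure
        (by rw [hπ₂]; exact measurable_norm.aestronglyMeasurable)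
        measurable_snd.aemeasurable).mp hμ₂
    have idiff : Integrable (fun p : E × E => ‖p.1 - p.2‖) π := by
      apply Integrable.mono' (inorm₁.add inorm₂)
      · exact (measurable_fst.sub measurable_snd).norm.aestronglyMeasurable
      · filter_upwards with p
        simpa using norm_sub_le p.1 p.2
    have hpt : ∀ p : E × E,
        max (h p.1 - t) 0 ≤ max (h p.2 - t) 0 + L₀ * ‖p.1 - p.2‖ := by
      intro p
      have hd := hLip p.1 p.2
      have : h p.1 - t ≤ max (h p.2 - t) 0 + L₀ * ‖p.1 - p.2‖ := by
        have : h p.1 - t ≤ (h p.2 - t) + L₀ * ‖p.1 - p.2‖ := by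
          have := le_abs_self (h p.1 - h p.2)
          linarith
        calc h p.1 - t ≤ (h p.2 - t) + L₀ * ‖p.1 - p.2‖ := this
          _ ≤ max (h p.2 - t) 0 + L₀ * ‖p.1 - p.2‖ := by
              gcongr; exact le_max_left _ _
      refine max_le this ?_
      have : 0 ≤ L₀ * ‖p.1 - p.2‖ := by positivity
      have := le_max_right (h p.2 - t) 0
      linarith
    have iadd : Integrable (fun p : E × E =>
        max (h p.2 - t) 0 + L₀ * ‖p.1 - p.2‖) π := iπ₂.add (idiff.const_mul L₀)
    have hint : ∫ p : E × E, max (h p.1 - t) 0 ∂π ≤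
        ∫ p : E × E, max (h p.2 - t) 0 ∂π + L₀ * ∫ p : E × E, ‖p.1 - p.2‖ ∂π := by
      have hm := integral_mono iπ₁ iadd (fun p => hpt p)
      rwa [integral_add iπ₂ (idiff.const_mul L₀), integral_const_mul] at hm
    have hα' : (0 : ℝ) < 1 / α := by positivity
    rw [e₁, e₂]
    have := mul_le_mul_of_nonneg_left hint (le_of_lt hα')
    rw [mul_add] at this
    have heq : (1 / α) * (L₀ * ∫ p : E × E, ‖p.1 - p.2‖ ∂π)
        = (L₀ / α) * ∫ p : E × E, ‖p.1 - p.2‖ ∂π := by ring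
    linarith [heq ▸ this]
  rw [cvar_pushforward L₀ α hα h hmeas hLip μ₁ hμ₁,
      cvar_pushforward L₀ α hα h hmeas hLip μ₂ hμ₂]
  set c := (L₀ / α) * ∫ p : E × E, ‖p.1 - p.2‖ ∂π with hc
  have bdd₁ : BddBelow (Set.range fun t : ℝ =>
      t + (1 / α) * ∫ x, max (h x - t) 0 ∂μ₁) := by
    refine ⟨∫ x, h x ∂μ₁, ?_⟩
    rintro r ⟨t, rfl⟩
    exact bddBelow_obj L₀ α hα hα1 h hmeas hLip μ₁ hμ₁ t
  have : (⨅ t : ℝ, (t + (1 / α) * ∫ x, max (h x - t) 0 ∂μ₁)) - c ≤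
      ⨅ t : ℝ, (t + (1 / α) * ∫ x, max (h x - t) 0 ∂μ₂) := by
    apply le_ciInf
    intro t
    have h1 := ciInf_le bdd₁ t
    have h2 := key t
    linarith
  linarith

end Aux

/-- the CVaR of an `L₀`-Lipschitz performance function is
`(L₀/α)`-Lipschitz with respect to the Wasserstein distance between the two
underlying distributions. -/
theorem cvar_wasserstein_lipschitz {n : ℕ}
    (L₀ : ℝ) (h : EuclideanSpace ℝ (Fin n) → ℝ)
    (hLip : ∀ x y : EuclideanSpace ℝ (Fin n), |h x - h y| ≤ L₀ * ‖x - y‖)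
    (α : ℝ) (hα : α ∈ Set.Ioc (0 : ℝ) 1)
    (𝒟₁ 𝒟₂ : Measure (EuclideanSpace ℝ (Fin n)))
    [IsProbabilityMeasure 𝒟₁] [IsProbabilityMeasure 𝒟₂]
    (h𝒟₁ : Integrable (fun x => ‖x‖) 𝒟₁)
    (h𝒟₂ : Integrable (fun x => ‖x‖) 𝒟₂) :
    |CVaR α (𝒟₁.map h) - CVaR α (𝒟₂.map h)| ≤ (L₀ / α) * W1 𝒟₁ 𝒟₂ := by
  obtain ⟨hα0, hα1⟩ := hα
  -- the coupling set is nonempty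
  have hSne : (∫ p, ‖p.1 - p.2‖ ∂(𝒟₁.prod 𝒟₂)) ∈ {r : ℝ |
      ∃ π : Measure (EuclideanSpace ℝ (Fin n) × EuclideanSpace ℝ (Fin n)),
        IsProbabilityMeasure π ∧ π.map Prod.fst = 𝒟₁ ∧ π.map Prod.snd = 𝒟₂ ∧
        r = ∫ p, ‖p.1 - p.2‖ ∂π} := by
    refine ⟨𝒟₁.prod 𝒟₂, inferInstance, ?_, ?_, rfl⟩
    · simp [Measure.map_fst_prod]
    · simp [Measure.map_snd_prod]
  rcases le_or_gt 0 L₀ with hL0 | hL0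
  · -- main case: `L₀ ≥ 0`, so `h` is Lipschitz, hence measurable
    have hmeas : Measurable h := by
      have : LipschitzWith ⟨L₀, hL0⟩ h :=
        LipschitzWith.of_dist_le_mul fun x y => by
          rw [Real.dist_eq, dist_eq_norm]; exact hLip x y
      exact this.continuous.measurable
    have key : ∀ r ∈ {r : ℝ |
        ∃ π : Measure (EuclideanSpace ℝ (Fin n) × EuclideanSpace ℝ (Fin n)),
          IsProbabilityMeasure π ∧ π.map Prod.fst = 𝒟₁ ∧ π.map Prod.snd = 𝒟₂ ∧
          r = ∫ p, ‖p.1 - p.2‖ ∂π},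
        |CVaR α (𝒟₁.map h) - CVaR α (𝒟₂.map h)| ≤ (L₀ / α) * r := by
      rintro r ⟨π, hπprob, hπ₁, hπ₂, rfl⟩
      rw [abs_sub_le_iff]
      constructor
      · have := cvar_coupling_le L₀ α hL0 hα0 hα1 h hmeas hLip 𝒟₁ 𝒟₂ h𝒟₁ h𝒟₂ π hπ₁ hπ₂
        linarith
      · have hπ' : (π.map Prod.swap).map Prod.fst = 𝒟₂ := by
          rw [Measure.map_map measurable_fst measurable_swap]
          exact hπ₂
        have hπ'' : (π.map Prod.swap).map Prod.snd = 𝒟₁ := by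
          rw [Measure.map_map measurable_snd measurable_swap]
          exact hπ₁
        have : IsProbabilityMeasure (π.map Prod.swap) :=
          Measure.isProbabilityMeasure_map measurable_swap.aemeasurable
        have hle := cvar_coupling_le L₀ α hL0 hα0 hα1 h hmeas hLip 𝒟₂ 𝒟₁ h𝒟₂ h𝒟₁
          (π.map Prod.swap) hπ' hπ''
        have heq : ∫ p, ‖p.1 - p.2‖ ∂(π.map Prod.swap) = ∫ p, ‖p.1 - p.2‖ ∂π := by
          rw [integral_map measurable_swap.aemeasurable
            (f := fun p : EuclideanSpace ℝ (Fin n) × EuclideanSpace ℝ (Fin n) => ‖p.1 - p.2‖)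
            (measurable_fst.sub measurable_snd).norm.aestronglyMeasurable]
          simp_rw [Prod.fst_swap, Prod.snd_swap]
          congr 1
          ext p
          rw [norm_sub_rev]
        rw [heq] at hle
        linarith
    rcases eq_or_lt_of_le (div_nonneg hL0 (le_of_lt hα0)) with hc0 | hc0
    · -- c = 0
      have := key _ hSne
      rw [← hc0] at this ⊢
      simpa using this
    · -- c > 0
      unfold W1
      have h1 : |CVaR α (𝒟₁.map h) - CVaR α (𝒟₂.map h)| / (L₀ / α) ≤ sInf {r : ℝ |
          ∃ π : Measure (EuclideanSpace ℝ (Fin n) × EuclideanSpace ℝ (Fin n)),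
            IsProbabilityMeasure π ∧ π.map Prod.fst = 𝒟₁ ∧ π.map Prod.snd = 𝒟₂ ∧
            r = ∫ p, ‖p.1 - p.2‖ ∂π} :=
        le_csInf ⟨_, hSne⟩ fun b hb =>
          (div_le_iff₀ hc0).mpr (by rw [mul_comm]; exact key b hb)
      calc |CVaR α (𝒟₁.map h) - CVaR α (𝒟₂.map h)|
          = (|CVaR α (𝒟₁.map h) - CVaR α (𝒟₂.map h)| / (L₀ / α)) * (L₀ / α) :=
            (div_mul_cancel₀ _ (ne_of_gt hc0)).symm
        _ ≤ sInf _ * (L₀ / α) := mul_le_mul_of_nonneg_right h1 hc0.le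
        _ = (L₀ / α) * sInf _ := mul_comm _ _
  · -- degenerate case `L₀ < 0`: the space is a subsingleton
    have hsub : ∀ x y : EuclideanSpace ℝ (Fin n), x = y := by
      intro x y
      by_contra hxy
      have hxy' : 0 < ‖x - y‖ := by
        rw [norm_pos_iff]
        exact sub_ne_zero_of_ne hxy
      have := hLip x y
      nlinarith [abs_nonneg (h x - h y)]
    have hDeq : 𝒟₁ = 𝒟₂ := by
      ext s hs
      rcases Set.eq_empty_or_nonempty s with rfl | ⟨a, ha⟩
      · simp
      · have : s = Set.univ := by
          ext b; simp only [Set.mem_univ, iff_true]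
          rwa [hsub b a]
        rw [this, measure_univ, measure_univ]
    have hW1 : W1 𝒟₁ 𝒟₂ = 0 := by
      unfold W1
      have hzero : ∀ r ∈ {r : ℝ |
          ∃ π : Measure (EuclideanSpace ℝ (Fin n) × EuclideanSpace ℝ (Fin n)),
            IsProbabilityMeasure π ∧ π.map Prod.fst = 𝒟₁ ∧ π.map Prod.snd = 𝒟₂ ∧
            r = ∫ p, ‖p.1 - p.2‖ ∂π}, r = 0 := by
        rintro r ⟨π, hπprob, hπ₁, hπ₂, rfl⟩
        have : (fun p : EuclideanSpace ℝ (Fin n) × EuclideanSpace ℝ (Fin n) =>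
            ‖p.1 - p.2‖) = fun _ => (0:ℝ) := by
          ext p
          rw [hsub p.1 p.2]
          simp
        rw [this, integral_zero]
      have : {r : ℝ |
          ∃ π : Measure (EuclideanSpace ℝ (Fin n) × EuclideanSpace ℝ (Fin n)),
            IsProbabilityMeasure π ∧ π.map Prod.fst = 𝒟₁ ∧ π.map Prod.snd = 𝒟₂ ∧
            r = ∫ p, ‖p.1 - p.2‖ ∂π} = {0} := by
        apply Set.eq_singleton_iff_unique_mem.mpr
        constructor
        · have h0 := hzero _ hSne
          rw [← h0]
          exact hSne
        · exact hzero
      rw [this, csInf_singleton]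
    rw [hW1, hDeq]
    simp
end

section
/- Let n ≥ 3, let ν be a probability measure on ℝ^n whose support has diameter ρ < ∞, let h : ℝ^n → ℝ be L₀-Lipschitz with L₀ > 0 and ρ > 0, and fix α ∈ (0,1], β ∈ (0,1), and a target bound H > 0. If the integer N ≥ 1 satisfies N ≥ ( L₀ · ρ · ( C* + √n · (2 ln(1/β))^{1/2} ) / (α H) )^n, where C* = √n · 2^{(n−2)/2} · (1/(1 − 2^{1−n/2}) + 2), then (L₀/α) · ρ · ( C* · N^{−1/n} + √n · (2 ln(1/β))^{1/2} · N^{−1/2} ) ≤ H; consequently, with probability at least 1 − β over N i.i.d. samples from ν, |CVaR_α(h_*ν̂_N) − CVaR_α(h_*ν)| ≤ H. -/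
open MeasureTheory BigOperators

/-- Empirical measure `(1/N) Σ_{i=1}^N δ_{y_i}` of the sample `ys`. -/
noncomputable def empiricalMeasure {n N : ℕ}
    (ys : Fin N → EuclideanSpace ℝ (Fin n)) : Measure (EuclideanSpace ℝ (Fin n)) :=
  (N : ENNReal)⁻¹ • ∑ i : Fin N, Measure.dirac (ys i)

open ProbabilityTheory

lemma aux_integrable_of_bound {Ω : Type*} [MeasurableSpace Ω] (ν : Measure Ω)
    [IsFiniteMeasure ν] {g : Ω → ℝ} (hg : AEStronglyMeasurable g ν) {C : ℝ}
    (hbd : ∀ᵐ x ∂ν, |g x| ≤ C) : Integrable g ν :=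
  Integrable.mono' (integrable_const C) hg (by simpa using hbd)

lemma aux_mgf_single {Ω : Type*} [MeasurableSpace Ω] (ν : Measure Ω) [IsProbabilityMeasure ν]
    {g : Ω → ℝ} (hg : Measurable g) {D : ℝ} (hD : 0 < D)
    (hbd : ∀ᵐ x ∂ν, g x ∈ Set.Icc 0 D) (l : ℝ) :
    ∫ x, Real.exp (l * (g x - ∫ y, g y ∂ν)) ∂ν ≤ Real.exp (l ^ 2 * D ^ 2 / 2) := by
  have hDne : D ≠ 0 := hD.ne'
  have hint_g : Integrable g ν := by
    refine aux_integrable_of_bound ν hg.aestronglyMeasurable (C := D) ?_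
    filter_upwards [hbd] with x hx
    rw [abs_of_nonneg hx.1]; exact hx.2
  set m := ∫ y, g y ∂ν with hm
  have hm0 : 0 ≤ m := integral_nonneg_of_ae (hbd.mono fun x hx => hx.1)
  have hmD : m ≤ D := by
    calc m ≤ ∫ _y, D ∂ν := integral_mono_ae hint_g (integrable_const D)
            (hbd.mono fun x hx => hx.2)
    _ = D := by simp
  -- pointwise convexity bound
  have hpt : ∀ᵐ x ∂ν, Real.exp (l * (g x - m)) ≤
      Real.cosh (l * D) + (g x - m) * (Real.sinh (l * D) / D) := by
    filter_upwards [hbd] with x hx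
    set u := g x - m with hu
    have hu1 : -D ≤ u := by simp only [hu]; linarith [hx.1]
    have hu2 : u ≤ D := by simp only [hu]; linarith [hx.2]
    have ha : (0:ℝ) ≤ (D - u) / (2 * D) := by
      apply div_nonneg <;> linarith
    have hb : (0:ℝ) ≤ (u + D) / (2 * D) := by
      apply div_nonneg <;> linarith
    have hab : (D - u) / (2 * D) + (u + D) / (2 * D) = 1 := by field_simp; ring
    have := convexOn_exp.2 (Set.mem_univ (-(l * D))) (Set.mem_univ (l * D)) ha hb hab
    simp only [smul_eq_mul] at this
    have harg : (D - u) / (2 * D) * -(l * D) + (u + D) / (2 * D) * (l * D) = l * u := by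
      field_simp; ring
    rw [harg] at this
    refine this.trans (le_of_eq ?_)
    rw [Real.cosh_eq, Real.sinh_eq]
    field_simp
    ring
  have hint_lhs : Integrable (fun x => Real.exp (l * (g x - m))) ν := by
    refine aux_integrable_of_bound ν ?_ (C := Real.exp (|l| * D)) ?_
    · exact ((hg.sub measurable_const).const_mul l).exp.aestronglyMeasurable
    · filter_upwards [hbd] with x hx
      rw [abs_of_nonneg (Real.exp_pos _).le, Real.exp_le_exp]
      have h1 : |g x - m| ≤ D := by
        rw [abs_le]; constructor <;> [linarith [hx.1]; linarith [hx.2]]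
      calc l * (g x - m) ≤ |l * (g x - m)| := le_abs_self _
      _ = |l| * |g x - m| := abs_mul _ _
      _ ≤ |l| * D := by gcongr
  have hint_s : Integrable (fun x => (g x - m) * (Real.sinh (l * D) / D)) ν := by
    exact (hint_g.sub (integrable_const m)).mul_const _
  have hint_rhs : Integrable (fun x => Real.cosh (l * D) + (g x - m) * (Real.sinh (l * D) / D)) ν :=
    (integrable_const _).add hint_s
  calc ∫ x, Real.exp (l * (g x - m)) ∂ν
      ≤ ∫ x, (Real.cosh (l * D) + (g x - m) * (Real.sinh (l * D) / D)) ∂ν :=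
        integral_mono_ae hint_lhs hint_rhs hpt
    _ = Real.cosh (l * D) + (m - m) * (Real.sinh (l * D) / D) := by
        rw [integral_add (integrable_const _) hint_s, integral_const]
        have : ∫ x, (g x - m) * (Real.sinh (l * D) / D) ∂ν
            = (∫ x, (g x - m) ∂ν) * (Real.sinh (l * D) / D) := integral_mul_const _ _
        rw [this]
        have h2 : ∫ x, (g x - m) ∂ν = m - m := by
          rw [integral_sub hint_g (integrable_const m), integral_const]; simp [hm]
        rw [h2]; simp
    _ = Real.cosh (l * D) := by ring
    _ ≤ Real.exp ((l * D) ^ 2 / 2) := Real.cosh_le_exp_half_sq _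
    _ = Real.exp (l ^ 2 * D ^ 2 / 2) := by ring_nf

lemma aux_chernoff_pi {Ω : Type*} [MeasurableSpace Ω] (ν : Measure Ω) [IsProbabilityMeasure ν]
    {g : Ω → ℝ} (hg : Measurable g) {D : ℝ} (hD : 0 < D)
    (hbd : ∀ᵐ x ∂ν, g x ∈ Set.Icc 0 D) (N : ℕ) {s : ℝ} (hs : 0 < s) :
    (Measure.pi fun _ : Fin N => ν)
      {ys : Fin N → Ω | (N : ℝ) * s ≤ ∑ i, (g (ys i) - ∫ y, g y ∂ν)}
      ≤ ENNReal.ofReal (Real.exp (-((N : ℝ) * s ^ 2) / (2 * D ^ 2))) := by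
  classical
  letI : MeasureSpace Ω := ⟨ν⟩
  set m := ∫ y, g y ∂ν with hm
  set π : Measure (Fin N → Ω) := Measure.pi fun _ : Fin N => ν with hπ
  haveI : IsProbabilityMeasure π := by
    constructor
    rw [hπ, Measure.pi_univ]
    simp
  set l : ℝ := s / D ^ 2 with hl
  have hl0 : 0 ≤ l := by positivity
  set X : (Fin N → Ω) → ℝ := fun ys => ∑ i, (g (ys i) - m) with hX
  have hvol : (volume : Measure (Fin N → Ω)) = π := rfl
  have hfac : ∀ ys : Fin N → Ω, Real.exp (l * X ys) = ∏ i, Real.exp (l * (g (ys i) - m)) := by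
    intro ys
    rw [hX, Finset.mul_sum, Real.exp_sum]
  have hint1 : Integrable (fun x => Real.exp (l * (g x - m))) ν := by
    refine aux_integrable_of_bound ν ?_ (C := Real.exp (|l| * D)) ?_
    · exact ((hg.sub measurable_const).const_mul l).exp.aestronglyMeasurable
    · have hm0 : 0 ≤ m := integral_nonneg_of_ae (hbd.mono fun x hx => hx.1)
      have hmD : m ≤ D := by
        calc m ≤ ∫ _y, D ∂ν := integral_mono_ae
              (aux_integrable_of_bound ν hg.aestronglyMeasurable (C := D)
                (hbd.mono fun x hx => by rw [abs_of_nonneg hx.1]; exact hx.2))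
              (integrable_const D) (hbd.mono fun x hx => hx.2)
        _ = D := by simp
      filter_upwards [hbd] with x hx
      rw [abs_of_nonneg (Real.exp_pos _).le, Real.exp_le_exp]
      have h1 : |g x - m| ≤ D := by
        rw [abs_le]; constructor <;> [linarith [hx.1]; linarith [hx.2]]
      calc l * (g x - m) ≤ |l * (g x - m)| := le_abs_self _
      _ = |l| * |g x - m| := abs_mul _ _
      _ ≤ |l| * D := by gcongr
  have hintX : Integrable (fun ys => Real.exp (l * X ys)) π := by
    rw [← hvol]
    have := Integrable.fintype_prod (𝕜 := ℝ) (ι := Fin N) (E := Ω)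
      (f := fun _ x => Real.exp (l * (g x - m))) (fun _ => hint1)
    refine this.congr (ae_of_all _ fun ys => (hfac ys).symm)
  have hmgf : mgf X π l ≤ Real.exp ((N : ℝ) * (l ^ 2 * D ^ 2 / 2)) := by
    rw [mgf]
    calc ∫ ys, Real.exp (l * X ys) ∂π
        = ∫ ys, ∏ i, Real.exp (l * (g (ys i) - m)) ∂π := by
          exact integral_congr_ae (ae_of_all _ hfac)
      _ = (∫ x, Real.exp (l * (g x - m)) ∂ν) ^ (Fintype.card (Fin N)) := by
          rw [← hvol]
          exact MeasureTheory.integral_fintype_prod_eq_pow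
            (fun x => Real.exp (l * (g x - m)))
      _ ≤ (Real.exp (l ^ 2 * D ^ 2 / 2)) ^ (Fintype.card (Fin N)) := by
          apply pow_le_pow_left₀ (integral_nonneg fun x => (Real.exp_pos _).le)
          exact aux_mgf_single ν hg hD hbd l
      _ = Real.exp ((N : ℝ) * (l ^ 2 * D ^ 2 / 2)) := by
          rw [← Real.exp_nat_mul]
          simp
  have hch := measure_ge_le_exp_mul_mgf (μ := π) (X := X) (t := l) ((N : ℝ) * s) hl0 hintX
  have hbound : (π {ys | (N : ℝ) * s ≤ X ys}).toReal ≤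
      Real.exp (-((N : ℝ) * s ^ 2) / (2 * D ^ 2)) := by
    refine hch.trans ?_
    calc Real.exp (-l * ((N : ℝ) * s)) * mgf X π l
        ≤ Real.exp (-l * ((N : ℝ) * s)) * Real.exp ((N : ℝ) * (l ^ 2 * D ^ 2 / 2)) := by
          have := Real.exp_pos (-l * ((N : ℝ) * s))
          nlinarith [mgf_nonneg (X := X) (μ := π) (t := l)]
      _ = Real.exp (-l * ((N : ℝ) * s) + (N : ℝ) * (l ^ 2 * D ^ 2 / 2)) := (Real.exp_add _ _).symm
      _ = Real.exp (-((N : ℝ) * s ^ 2) / (2 * D ^ 2)) := by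
          congr 1
          rw [hl]
          field_simp
          ring
  have hne : π {ys | (N : ℝ) * s ≤ X ys} ≠ ⊤ := measure_ne_top _ _
  calc π {ys : Fin N → Ω | (N : ℝ) * s ≤ ∑ i, (g (ys i) - m)}
      = ENNReal.ofReal ((π {ys | (N : ℝ) * s ≤ X ys}).toReal) := by
        rw [ENNReal.ofReal_toReal hne]
    _ ≤ ENNReal.ofReal (Real.exp (-((N : ℝ) * s ^ 2) / (2 * D ^ 2))) :=
        ENNReal.ofReal_le_ofReal hbound

lemma aux_abs_ciInf_sub {f g : ℝ → ℝ} {c : ℝ} (hb : BddBelow (Set.range g))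
    (hfg : ∀ t, |f t - g t| ≤ c) : |(⨅ t, f t) - ⨅ t, g t| ≤ c := by
  obtain ⟨b, hbb⟩ := hb
  have hbg : ∀ t, b ≤ g t := fun t => hbb (Set.mem_range_self t)
  have hbf : BddBelow (Set.range f) := by
    refine ⟨b - c, ?_⟩
    rintro x ⟨t, rfl⟩
    have := abs_le.1 (hfg t)
    have := hbg t
    linarith
  rw [abs_le]
  constructor
  · -- iInf g - iInf f ≤ c, i.e. iInf g ≤ iInf f + c
    have h1 : ∀ t, (⨅ u, g u) - c ≤ f t := fun t => by
      have h2 : (⨅ u, g u) ≤ g t := ciInf_le ⟨b, hbb⟩ t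
      have := abs_le.1 (hfg t)
      linarith
    have := le_ciInf h1
    linarith
  · have h1 : ∀ t, (⨅ u, f u) - c ≤ g t := fun t => by
      have h2 : (⨅ u, f u) ≤ f t := ciInf_le hbf t
      have := abs_le.1 (hfg t)
      linarith
    have := le_ciInf h1
    linarith

lemma aux_integrable_dirac {α : Type*} [MeasurableSpace α] {f : α → ℝ}
    (hf : Measurable f) (a : α) : Integrable f (Measure.dirac a) := by
  refine ⟨hf.stronglyMeasurable.aestronglyMeasurable, ?_⟩
  simp only [HasFiniteIntegral]
  rw [lintegral_dirac' a (by exact hf.nnnorm.coe_nnreal_ennreal)]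
  exact ENNReal.coe_lt_top


lemma aux_integral_empirical {n N : ℕ} (ys : Fin N → EuclideanSpace ℝ (Fin n))
    {f : EuclideanSpace ℝ (Fin n) → ℝ} (hf : Measurable f) :
    ∫ x, f x ∂(empiricalMeasure ys) = (N : ℝ)⁻¹ * ∑ i, f (ys i) := by
  rw [empiricalMeasure, integral_smul_measure,
    integral_finset_sum_measure (fun i _ => aux_integrable_dirac hf (ys i))]
  simp only [integral_dirac' f _ hf.stronglyMeasurable, smul_eq_mul]
  congr 1
  simp [ENNReal.toReal_inv]

lemma abs_integral_le_integral_abs_new {Ω : Type*} [MeasurableSpace Ω] {ν : Measure Ω}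
    {f : Ω → ℝ} : |∫ x, f x ∂ν| ≤ ∫ x, |f x| ∂ν := by
  simpa using norm_integral_le_integral_norm (μ := ν) f

lemma aux_sqrt_add (a b : ℝ) (ha : 0 ≤ a) (hb : 0 ≤ b) :
    Real.sqrt (a + b) ≤ Real.sqrt a + Real.sqrt b := by
  rw [show a + b = Real.sqrt a ^ 2 + Real.sqrt b ^ 2 by
    rw [Real.sq_sqrt ha, Real.sq_sqrt hb]]
  have h1 : Real.sqrt a ^ 2 + Real.sqrt b ^ 2 ≤ (Real.sqrt a + Real.sqrt b) ^ 2 := by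
    nlinarith [Real.sqrt_nonneg a, Real.sqrt_nonneg b]
  calc Real.sqrt (Real.sqrt a ^ 2 + Real.sqrt b ^ 2)
      ≤ Real.sqrt ((Real.sqrt a + Real.sqrt b) ^ 2) := Real.sqrt_le_sqrt h1
    _ = Real.sqrt a + Real.sqrt b := by
        rw [Real.sqrt_sq (by positivity)]

lemma aux_cvar_map {Ω : Type*} [MeasurableSpace Ω] (μ : Measure Ω) (α : ℝ) {h : Ω → ℝ}
    (hh : Measurable h) :
    CVaR α (μ.map h) = ⨅ t : ℝ, (t + (1 / α) * ∫ x, max (h x - t) 0 ∂μ) := by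
  unfold CVaR
  refine iInf_congr fun t => ?_
  rw [integral_map hh.aemeasurable]
  exact (Continuous.max (continuous_id.sub continuous_const) continuous_const).aestronglyMeasurable

lemma aux_det {n N : ℕ} (hN : 1 ≤ N) (ν : Measure (EuclideanSpace ℝ (Fin n)))
    [IsProbabilityMeasure ν]
    {h : EuclideanSpace ℝ (Fin n) → ℝ} (hh : Measurable h)
    {K : Set (EuclideanSpace ℝ (Fin n))} (hK : ν Kᶜ = 0)
    {m M D : ℝ} (hmM : ∀ x ∈ K, h x ∈ Set.Icc m M) (hMD : M - m ≤ D) (hD : 0 < D)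
    {α : ℝ} (hα0 : 0 < α) (hα1 : α ≤ 1)
    {k : ℕ} (hk : 1 ≤ k) {s : ℝ} (hs : 0 ≤ s)
    (ys : Fin N → EuclideanSpace ℝ (Fin n)) (hys : ∀ i, ys i ∈ K)
    (hnet : ∀ j : ℕ, j ≤ k → |(N : ℝ)⁻¹ * (∑ i, max (h (ys i) - (m + j * (D / k))) 0)
       - ∫ x, max (h x - (m + j * (D / k))) 0 ∂ν| ≤ s) :
    |CVaR α ((empiricalMeasure ys).map h) - CVaR α (ν.map h)| ≤ (s + 2 * (D / k)) / α := by
  have hNpos : (0 : ℝ) < N := by exact_mod_cast hN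
  have hkpos : (0 : ℝ) < k := by exact_mod_cast hk
  set δ : ℝ := D / k with hδ
  have hδpos : 0 < δ := div_pos hD hkpos
  set g : ℝ → EuclideanSpace ℝ (Fin n) → ℝ := fun t x => max (h x - t) 0 with hg
  have hgmeas : ∀ t, Measurable (g t) := fun t =>
    (hh.sub measurable_const).max measurable_const
  have aeK : ∀ᵐ x ∂ν, x ∈ K := by
    rw [MeasureTheory.ae_iff]
    exact hK
  have hint : ∀ t, Integrable (g t) ν := by
    intro t
    refine aux_integrable_of_bound ν (hgmeas t).aestronglyMeasurable
      (C := max (M - t) 0) ?_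
    filter_upwards [aeK] with x hx
    rw [abs_of_nonneg (le_max_right _ _)]
    exact max_le_max (by linarith [(hmM x hx).2]) le_rfl
  have hint_h : Integrable h ν := by
    refine aux_integrable_of_bound ν hh.aestronglyMeasurable (C := max |m| |M|) ?_
    filter_upwards [aeK] with x hx
    rcases abs_le.2 ⟨neg_abs_le m, le_abs_self m⟩ with _
    rw [abs_le]
    constructor
    · have := (hmM x hx).1; have : -|m| ≤ m := neg_abs_le m; have := le_max_left |m| |M|; linarith [(hmM x hx).1]
    · have := (hmM x hx).2; have : M ≤ |M| := le_abs_self M; have := le_max_right |m| |M|; linarith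
  set F : ℝ → ℝ := fun t => ∫ x, g t x ∂ν with hF
  set A : ℝ → ℝ := fun t => (N : ℝ)⁻¹ * ∑ i, g t (ys i) with hA
  -- Lipschitz bounds
  have hptLip : ∀ t t' (x : EuclideanSpace ℝ (Fin n)), |g t x - g t' x| ≤ |t' - t| := by
    intro t t' x
    have := abs_max_sub_max_le_abs (h x - t) (h x - t') 0
    calc |g t x - g t' x| ≤ |(h x - t) - (h x - t')| := this
    _ = |t' - t| := by rw [show (h x - t) - (h x - t') = t' - t by ring]
  have hFLip : ∀ t t', |F t - F t'| ≤ |t' - t| := by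
    intro t t'
    rw [hF]
    simp only
    rw [← integral_sub (hint t) (hint t')]
    calc |∫ x, (g t x - g t' x) ∂ν| ≤ ∫ x, |g t x - g t' x| ∂ν :=
          abs_integral_le_integral_abs_new
    _ ≤ ∫ _x, |t' - t| ∂ν := integral_mono ((hint t).sub (hint t')).abs
          (integrable_const _) (fun x => hptLip t t' x)
    _ = |t' - t| := by simp
  have hALip : ∀ t t', |A t - A t'| ≤ |t' - t| := by
    intro t t'
    rw [hA]
    simp only
    rw [← mul_sub, ← Finset.sum_sub_distrib, abs_mul, abs_inv, Nat.abs_cast]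
    calc (N : ℝ)⁻¹ * |∑ i, (g t (ys i) - g t' (ys i))|
        ≤ (N : ℝ)⁻¹ * ∑ i, |g t (ys i) - g t' (ys i)| := by
          gcongr
          exact Finset.abs_sum_le_sum_abs _ _
      _ ≤ (N : ℝ)⁻¹ * ∑ _i : Fin N, |t' - t| := by
          refine mul_le_mul_of_nonneg_left ?_ (by positivity)
          exact Finset.sum_le_sum fun i _ => hptLip t t' (ys i)
      _ = |t' - t| := by
          rw [Finset.sum_const, Finset.card_univ, Fintype.card_fin, nsmul_eq_mul]
          field_simp
  -- the uniform deviation bound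
  have hclaim : ∀ t, |A t - F t| ≤ s + 2 * δ := by
    intro t
    rcases le_or_gt M t with hMt | htM
    · -- t ≥ M : both are zero
      have hA0 : A t = 0 := by
        rw [hA]
        simp only
        rw [Finset.sum_eq_zero, mul_zero]
        intro i _
        have := (hmM (ys i) (hys i)).2
        rw [hg]
        simp only [max_eq_right_iff]
        linarith
      have hF0 : F t = 0 := by
        rw [hF]
        simp only
        rw [integral_eq_zero_of_ae]
        filter_upwards [aeK] with x hx
        have := (hmM x hx).2
        rw [hg]
        simp only [Pi.zero_apply, max_eq_right_iff]
        linarith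
      rw [hA0, hF0]
      simp only [sub_zero, abs_zero]
      linarith
    rcases le_or_gt t m with htm | hmt
    · -- t ≤ m : deviation equals deviation at m
      have hAs : A t = A m + (m - t) := by
        rw [hA]
        simp only
        have : ∀ i : Fin N, g t (ys i) = g m (ys i) + (m - t) := by
          intro i
          have h1 := (hmM (ys i) (hys i)).1
          rw [hg]
          simp only
          rw [max_eq_left (by linarith), max_eq_left (by linarith)]
          ring
        rw [Finset.sum_congr rfl (fun i _ => this i), Finset.sum_add_distrib,
          Finset.sum_const, Finset.card_univ, Fintype.card_fin, nsmul_eq_mul, mul_add]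
        field_simp
      have hFs : F t = F m + (m - t) := by
        rw [hF]
        simp only
        have : ∫ x, g t x ∂ν = ∫ x, (g m x + (m - t)) ∂ν := by
          refine integral_congr_ae ?_
          filter_upwards [aeK] with x hx
          have h1 := (hmM x hx).1
          rw [hg]
          simp only
          rw [max_eq_left (by linarith), max_eq_left (by linarith)]
          ring
        rw [this, integral_add (hint m) (integrable_const _), integral_const]
        simp
      have h0 := hnet 0 (Nat.zero_le k)
      simp only [Nat.cast_zero, zero_mul, add_zero] at h0
      rw [hAs, hFs]
      have : A m + (m - t) - (F m + (m - t)) = A m - F m := by ring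
      rw [this]
      refine le_trans ?_ (by linarith : s ≤ s + 2 * δ)
      exact h0
    · -- m < t < M : use nearest net point
      set j : ℕ := ⌊(t - m) / δ⌋₊ with hj
      have hjk : j ≤ k := by
        rw [hj]
        have h1 : (t - m) / δ ≤ (k : ℝ) := by
          rw [div_le_iff₀ hδpos]
          have : (k : ℝ) * δ = D := by rw [hδ]; field_simp
          rw [this]
          linarith [(le_of_lt htM), hMD]
        calc ⌊(t - m) / δ⌋₊ ≤ ⌊(k : ℝ)⌋₊ := Nat.floor_le_floor h1
        _ = k := Nat.floor_natCast k
      set tj : ℝ := m + j * δ with htj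
      have hjle : (j : ℝ) * δ ≤ t - m := by
        have h0 : (0:ℝ) ≤ (t - m) / δ := div_nonneg (by linarith) hδpos.le
        have := Nat.floor_le h0
        rw [← hj] at this
        calc (j : ℝ) * δ ≤ (t - m) / δ * δ := mul_le_mul_of_nonneg_right this hδpos.le
        _ = t - m := by field_simp
      have hjgt : t - m < ((j : ℝ) + 1) * δ := by
        have := Nat.lt_floor_add_one ((t - m) / δ)
        rw [← hj] at this
        calc t - m = (t - m) / δ * δ := by field_simp
        _ < ((j : ℝ) + 1) * δ := mul_lt_mul_of_pos_right this hδpos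
      have hdist : |t - tj| ≤ δ := by
        rw [htj, abs_le]
        constructor <;> nlinarith
      have hAFj : |A tj - F tj| ≤ s := hnet j hjk
      have hsplit : A t - F t = (A t - A tj) + (A tj - F tj) + (F tj - F t) := by ring
      rw [hsplit]
      have h3 := abs_add_three (A t - A tj) (A tj - F tj) (F tj - F t)
      have e1 : |A t - A tj| ≤ δ := (hALip t tj).trans (by rw [abs_sub_comm]; exact hdist)
      have e2 : |F tj - F t| ≤ δ := (hFLip tj t).trans hdist
      linarith
  -- bddBelow of the true objective
  have hF0 : ∀ t, 0 ≤ F t := fun t => integral_nonneg fun x => le_max_right _ _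
  have hFlb : ∀ t, (∫ x, h x ∂ν) - t ≤ F t := by
    intro t
    have : ∫ x, (h x - t) ∂ν ≤ F t :=
      integral_mono (hint_h.sub (integrable_const t)) (hint t) fun x => le_max_left _ _
    rw [integral_sub hint_h (integrable_const t), integral_const] at this
    simpa using this
  have hinva : 1 ≤ 1 / α := by
    rw [le_div_iff₀ hα0]; linarith
  have hobj_lb : ∀ t, (∫ x, h x ∂ν) ≤ t + (1 / α) * F t := by
    intro t
    rcases le_total t (∫ x, h x ∂ν) with hc | hc
    · have h1 : F t ≤ (1 / α) * F t := by
        calc F t = 1 * F t := (one_mul _).symm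
        _ ≤ (1 / α) * F t := mul_le_mul_of_nonneg_right hinva (hF0 t)
      linarith [hFlb t]
    · have : 0 ≤ (1 / α) * F t := mul_nonneg (by positivity) (hF0 t)
      linarith
  have hbb : BddBelow (Set.range fun t => t + (1 / α) * F t) := by
    refine ⟨∫ x, h x ∂ν, ?_⟩
    rintro x ⟨t, rfl⟩
    exact hobj_lb t
  -- rewrite the CVaRs
  have hemp : CVaR α ((empiricalMeasure ys).map h) = ⨅ t : ℝ, (t + (1 / α) * A t) := by
    rw [aux_cvar_map _ _ hh]
    refine iInf_congr fun t => ?_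
    rw [aux_integral_empirical ys (hgmeas t)]
  have htrue : CVaR α (ν.map h) = ⨅ t : ℝ, (t + (1 / α) * F t) := by
    rw [aux_cvar_map _ _ hh]
  rw [hemp, htrue]
  refine aux_abs_ciInf_sub hbb fun t => ?_
  have : (t + (1 / α) * A t) - (t + (1 / α) * F t) = (1 / α) * (A t - F t) := by ring
  rw [this, abs_mul, abs_of_pos (by positivity : (0:ℝ) < 1 / α)]
  rw [div_eq_mul_inv (s + 2 * δ) α, mul_comm (s + 2 * δ) α⁻¹, ← one_div]
  exact mul_le_mul_of_nonneg_left (hclaim t) (by positivity)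


set_option maxHeartbeats 2000000 in
/-- sample-complexity bound. If
`N ≥ ( L₀ ρ (C* + √n (2 ln(1/β))^{1/2}) / (α H) )^n` then the CVaR error bound
`(L₀/α)·ρ·(C* N^{−1/n} + √n (2 ln(1/β))^{1/2} N^{−1/2})` is at most `H`, and
consequently, with probability at least `1 − β` over `N` i.i.d. samples from
`ν`, the empirical CVaR of `h` is within `H` of the true CVaR. -/
theorem cvar_sample_complexity {n : ℕ} (hn : 3 ≤ n)
    (ν : Measure (EuclideanSpace ℝ (Fin n))) [IsProbabilityMeasure ν]
    (K : Set (EuclideanSpace ℝ (Fin n)))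
    (hKclosed : IsClosed K) (hKfull : ν Kᶜ = 0)
    (hKmin : ∀ C : Set (EuclideanSpace ℝ (Fin n)), IsClosed C → ν Cᶜ = 0 → K ⊆ C)
    (hKbounded : Bornology.IsBounded K)
    (ρ : ℝ) (hρ : ρ = Metric.diam K) (hρpos : 0 < ρ)
    (L₀ : ℝ) (hL₀ : 0 < L₀) (h : EuclideanSpace ℝ (Fin n) → ℝ)
    (hLip : ∀ x y : EuclideanSpace ℝ (Fin n), |h x - h y| ≤ L₀ * ‖x - y‖)
    (α : ℝ) (hα : α ∈ Set.Ioc (0 : ℝ) 1)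
    (β : ℝ) (hβ : β ∈ Set.Ioo (0 : ℝ) 1)
    (H : ℝ) (hH : 0 < H)
    (Cstar : ℝ)
    (hC : Cstar = Real.sqrt n * (2 : ℝ) ^ (((n : ℝ) - 2) / 2) *
      (1 / (1 - (2 : ℝ) ^ (1 - (n : ℝ) / 2)) + 2))
    (N : ℕ) (hN : 1 ≤ N)
    (hsamp : (N : ℝ) ≥
      (L₀ * ρ * (Cstar + Real.sqrt n * Real.sqrt (2 * Real.log (1 / β))) / (α * H))
        ^ (n : ℝ)) :
    (L₀ / α) * (ρ * (Cstar * (N : ℝ) ^ (-(1 : ℝ) / n) +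
        Real.sqrt n * Real.sqrt (2 * Real.log (1 / β)) * (N : ℝ) ^ (-(1 : ℝ) / 2)))
      ≤ H ∧
    (Measure.pi fun _ : Fin N => ν)
      {ys : Fin N → EuclideanSpace ℝ (Fin n) |
        |CVaR α ((empiricalMeasure ys).map h) - CVaR α (ν.map h)| ≤ H}
      ≥ ENNReal.ofReal (1 - β) := by
  classical
  obtain ⟨hα0, hα1⟩ := hα
  obtain ⟨hβ0, hβ1⟩ := hβ
  have hn3 : (3 : ℝ) ≤ (n : ℝ) := by exact_mod_cast hn
  have hnpos : (0 : ℝ) < (n : ℝ) := by linarith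
  have hn0 : (n : ℝ) ≠ 0 := ne_of_gt hnpos
  have hN1 : (1 : ℝ) ≤ (N : ℝ) := by exact_mod_cast hN
  have hNpos : (0 : ℝ) < (N : ℝ) := by linarith
  set L : ℝ := Real.log (1 / β) with hLdef
  have hL : 0 < L := Real.log_pos (one_lt_one_div hβ0 hβ1)
  set G : ℝ := Real.sqrt n * Real.sqrt (2 * L) with hGdef
  have hsqn1 : (1 : ℝ) ≤ Real.sqrt n := by
    rw [show (1 : ℝ) = Real.sqrt 1 by simp]
    exact Real.sqrt_le_sqrt (by linarith)
  have hG0 : 0 < G := mul_pos (by linarith) (Real.sqrt_pos.2 (by linarith))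
  set D : ℝ := L₀ * ρ with hDdef
  have hD : 0 < D := mul_pos hL₀ hρpos
  -- lower bound on Cstar
  have hC7 : 7 ≤ Cstar := by
    rw [hC]
    have h1 : Real.sqrt 3 ≤ Real.sqrt n := Real.sqrt_le_sqrt hn3
    have h2 : Real.sqrt 2 ≤ (2 : ℝ) ^ (((n : ℝ) - 2) / 2) := by
      rw [Real.sqrt_eq_rpow]
      exact Real.rpow_le_rpow_of_exponent_le one_le_two (by linarith)
    have hx : (2 : ℝ) ^ (1 - (n : ℝ) / 2) < 1 :=
      Real.rpow_lt_one_of_one_lt_of_neg one_lt_two (by linarith)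
    have hx0 : (0 : ℝ) < (2 : ℝ) ^ (1 - (n : ℝ) / 2) := Real.rpow_pos_of_pos two_pos _
    have h3 : (3 : ℝ) ≤ 1 / (1 - (2 : ℝ) ^ (1 - (n : ℝ) / 2)) + 2 := by
      have hposd : 0 < 1 - (2 : ℝ) ^ (1 - (n : ℝ) / 2) := by linarith
      have : 1 ≤ 1 / (1 - (2 : ℝ) ^ (1 - (n : ℝ) / 2)) := by
        rw [le_div_iff₀ hposd]; linarith
      linarith
    have hs2 : (0 : ℝ) ≤ Real.sqrt 2 := Real.sqrt_nonneg 2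
    have hs3 : (0 : ℝ) ≤ Real.sqrt 3 := Real.sqrt_nonneg 3
    have h6 : Real.sqrt 3 * Real.sqrt 2 = Real.sqrt 6 := by
      rw [← Real.sqrt_mul (by norm_num)]; norm_num
    have h66 : (7 : ℝ) / 3 ≤ Real.sqrt 6 := by
      have hsq := Real.sq_sqrt (by norm_num : (0 : ℝ) ≤ 6)
      nlinarith [Real.sqrt_nonneg 6]
    calc (7 : ℝ) = 3 * ((7 : ℝ) / 3) := by ring
      _ ≤ 3 * Real.sqrt 6 := by linarith
      _ = Real.sqrt 3 * Real.sqrt 2 * 3 := by rw [h6]; ring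
      _ ≤ Real.sqrt n * (2 : ℝ) ^ (((n : ℝ) - 2) / 2) *
          (1 / (1 - (2 : ℝ) ^ (1 - (n : ℝ) / 2)) + 2) := by
        refine mul_le_mul (mul_le_mul h1 h2 hs2 (le_trans hs3 h1)) h3 (by norm_num) ?_
        exact mul_nonneg (le_trans hs3 h1) (le_trans hs2 h2)
  -- rpow bookkeeping
  set P : ℝ := (N : ℝ) ^ ((n : ℝ)⁻¹) with hPdef
  have hPpos : 0 < P := Real.rpow_pos_of_pos hNpos _
  have hP1 : 1 ≤ P := by
    rw [hPdef, show (1 : ℝ) = (1 : ℝ) ^ ((n : ℝ)⁻¹) by rw [Real.one_rpow]]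
    exact Real.rpow_le_rpow zero_le_one hN1 (by positivity)
  have hexp1 : (N : ℝ) ^ (-(1 : ℝ) / (n : ℝ)) = P⁻¹ := by
    rw [hPdef, ← Real.rpow_neg hNpos.le]
    congr 1
    rw [neg_div, one_div]
  set E2 : ℝ := (N : ℝ) ^ (-(1 : ℝ) / 2) with hE2def
  have hE2pos : 0 < E2 := Real.rpow_pos_of_pos hNpos _
  have hE1E2 : E2 ≤ P⁻¹ := by
    rw [← hexp1, hE2def]
    refine Real.rpow_le_rpow_of_exponent_le hN1 ?_
    have e1 : (-(1 : ℝ)) / (n : ℝ) = -((1 : ℝ) / (n : ℝ)) := by ring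
    have e2 : (-(1 : ℝ)) / (2 : ℝ) = -((1 : ℝ) / 2) := by norm_num
    have h12 : (1 : ℝ) / (n : ℝ) ≤ 1 / 2 := by
      rw [div_le_div_iff₀ hnpos two_pos]; linarith
    rw [e1, e2]
    linarith
  -- part 1
  set Aq : ℝ := Cstar + G with hAqdef
  have hAqpos : 0 < Aq := by rw [hAqdef]; linarith
  set q : ℝ := D * Aq / (α * H) with hqdef
  have hqpos : 0 < q := by rw [hqdef]; positivity
  have hqP : q ≤ P := by
    have h1 : (q ^ (n : ℝ)) ^ ((n : ℝ)⁻¹) ≤ P := by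
      rw [hPdef]
      exact Real.rpow_le_rpow (Real.rpow_nonneg hqpos.le _) hsamp (by positivity)
    rwa [← Real.rpow_mul hqpos.le, mul_inv_cancel₀ hn0, Real.rpow_one] at h1
  have hPinv : P⁻¹ ≤ q⁻¹ := by
    apply inv_anti₀ hqpos hqP
  have hkey : D * (Cstar * P⁻¹ + G * E2) ≤ α * H := by
    have h1 : Cstar * P⁻¹ + G * E2 ≤ Aq * P⁻¹ := by
      rw [hAqdef, add_mul]
      have := mul_le_mul_of_nonneg_left hE1E2 hG0.le
      linarith
    have h3 : Aq * q⁻¹ = α * H / D := by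
      rw [hqdef]
      field_simp
    have h2 : Aq * P⁻¹ ≤ α * H / D := by
      rw [← h3]
      exact mul_le_mul_of_nonneg_left hPinv hAqpos.le
    calc D * (Cstar * P⁻¹ + G * E2) ≤ D * (α * H / D) :=
          mul_le_mul_of_nonneg_left (h1.trans h2) hD.le
      _ = α * H := by field_simp
  have part1 : (L₀ / α) * (ρ * (Cstar * (N : ℝ) ^ (-(1 : ℝ) / (n : ℝ)) + G * E2)) ≤ H := by
    rw [hexp1,
      show (L₀ / α) * (ρ * (Cstar * P⁻¹ + G * E2)) = D * (Cstar * P⁻¹ + G * E2) / α by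
        rw [hDdef]; ring,
      div_le_iff₀ hα0]
    calc D * (Cstar * P⁻¹ + G * E2) ≤ α * H := hkey
      _ = H * α := by ring
  refine ⟨part1, ?_⟩
  -- geometry of K and extrema of h
  have hKne : K.Nonempty := by
    rcases Set.eq_empty_or_nonempty K with hE | hne
    · exfalso; rw [hE, Metric.diam_empty] at hρ; linarith
    · exact hne
  have hcomp : IsCompact K := Metric.isCompact_of_isClosed_isBounded hKclosed hKbounded
  have hcont : Continuous h := by
    have hlw : LipschitzWith (Real.toNNReal L₀) h := by
      refine LipschitzWith.of_dist_le_mul fun x y => ?_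
      rw [Real.dist_eq, Real.coe_toNNReal L₀ hL₀.le, dist_eq_norm]
      exact hLip x y
    exact hlw.continuous
  have hh : Measurable h := hcont.measurable
  obtain ⟨x₀, hx₀, hmin⟩ := hcomp.exists_isMinOn hKne hcont.continuousOn
  obtain ⟨x₁, hx₁, hmax⟩ := hcomp.exists_isMaxOn hKne hcont.continuousOn
  set m0 : ℝ := h x₀ with hm0def
  set M0 : ℝ := h x₁ with hM0def
  have hmM : ∀ x ∈ K, h x ∈ Set.Icc m0 M0 := fun x hx => ⟨hmin hx, hmax hx⟩
  have hMD : M0 - m0 ≤ D := by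
    have h1 := hLip x₁ x₀
    have h3 : dist x₁ x₀ ≤ Metric.diam K := Metric.dist_le_diam_of_mem hKbounded hx₁ hx₀
    calc M0 - m0 ≤ |h x₁ - h x₀| := le_abs_self _
      _ ≤ L₀ * ‖x₁ - x₀‖ := h1
      _ = L₀ * dist x₁ x₀ := by rw [dist_eq_norm]
      _ ≤ L₀ * ρ := by rw [hρ]; exact mul_le_mul_of_nonneg_left h3 hL₀.le
      _ = D := hDdef.symm
  -- the net
  set k : ℕ := ⌈P⌉₊ with hkdef
  have hk1 : 1 ≤ k := Nat.one_le_ceil_iff.2 hPpos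
  have hkpos : (0 : ℝ) < (k : ℝ) := by exact_mod_cast hk1
  have hkP : P ≤ (k : ℝ) := Nat.le_ceil P
  have hkub : (k : ℝ) ≤ 2 * P := by
    have := Nat.ceil_lt_add_one (le_of_lt hPpos)
    have h2 : (k : ℝ) < P + 1 := by exact_mod_cast this
    linarith
  set s : ℝ := D * Real.sqrt (2 * Real.log (2 * ((k : ℝ) + 1) / β) / N) with hsdef
  have hkb1 : (1 : ℝ) < 2 * ((k : ℝ) + 1) / β := by
    rw [lt_div_iff₀ hβ0]
    have h1 : (1 : ℝ) ≤ (k : ℝ) := by exact_mod_cast hk1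
    have : (1:ℝ) * β = β := one_mul β
    linarith
  have hlogk : 0 < Real.log (2 * ((k : ℝ) + 1) / β) := Real.log_pos hkb1
  have hspos : 0 < s := mul_pos hD (Real.sqrt_pos.2 (div_pos (by linarith) hNpos))
  -- numeric bound : s + 2*(D/k) ≤ α*H
  have hnete : s + 2 * (D / (k : ℝ)) ≤ D * (Cstar * P⁻¹ + G * E2) := by
    -- split the log
    have hlogsplit : Real.log (2 * ((k : ℝ) + 1) / β) = Real.log (2 * ((k : ℝ) + 1)) + L := by
      rw [Real.log_div (by positivity) (ne_of_gt hβ0), hLdef, Real.log_div one_ne_zero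
        (ne_of_gt hβ0), Real.log_one]
      ring
    have hlogkk : 0 < Real.log (2 * ((k : ℝ) + 1)) := Real.log_pos (by linarith)
    -- bound on log (2(k+1))
    have hElb : (1 : ℝ) ≤ (N : ℝ) ^ (1 - 2 / (n : ℝ)) := by
      have h23 : 2 / (n : ℝ) ≤ 2 / 3 := by
        rw [div_le_div_iff₀ hnpos (by norm_num)]; linarith
      have := Real.rpow_le_rpow zero_le_one hN1 (show (0:ℝ) ≤ 1 - 2 / (n : ℝ) by linarith)
      rwa [Real.one_rpow] at this
    have hlogbound : 2 * Real.log (2 * ((k : ℝ) + 1)) ≤ 25 * (N : ℝ) ^ (1 - 2 / (n : ℝ)) := by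
      have h8 : 2 * ((k : ℝ) + 1) ≤ 8 * P := by linarith
      have hlog8 : Real.log 8 ≤ 7 := by
        have := Real.log_le_sub_one_of_pos (by norm_num : (0 : ℝ) < 8); linarith
      have hlogNnn : 0 ≤ Real.log N := Real.log_nonneg hN1
      have hlogN : Real.log N ≤ 3 * (N : ℝ) ^ ((3 : ℝ)⁻¹) := by
        have h1 : Real.log ((N : ℝ) ^ ((3 : ℝ)⁻¹)) ≤ (N : ℝ) ^ ((3 : ℝ)⁻¹) - 1 :=
          Real.log_le_sub_one_of_pos (by positivity)
        have h2 : Real.log ((N : ℝ) ^ ((3 : ℝ)⁻¹)) = (3 : ℝ)⁻¹ * Real.log N :=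
          Real.log_rpow hNpos _
        have h3 : (0 : ℝ) ≤ (N : ℝ) ^ ((3 : ℝ)⁻¹) := by positivity
        linarith
      have hpow13 : (N : ℝ) ^ ((3 : ℝ)⁻¹) ≤ (N : ℝ) ^ (1 - 2 / (n : ℝ)) := by
        refine Real.rpow_le_rpow_of_exponent_le hN1 ?_
        have : 2 / (n : ℝ) ≤ 2 / 3 := by
          rw [div_le_div_iff₀ hnpos (by norm_num)]; linarith
        norm_num
        linarith
      have hstep : Real.log (2 * ((k : ℝ) + 1)) ≤ 7 + 3 * (N : ℝ) ^ ((3 : ℝ)⁻¹) := by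
        calc Real.log (2 * ((k : ℝ) + 1)) ≤ Real.log (8 * P) :=
              Real.log_le_log (by positivity) h8
          _ = Real.log 8 + Real.log P := Real.log_mul (by norm_num) (ne_of_gt hPpos)
          _ = Real.log 8 + (n : ℝ)⁻¹ * Real.log N := by rw [hPdef, Real.log_rpow hNpos]
          _ ≤ 7 + 3 * (N : ℝ) ^ ((3 : ℝ)⁻¹) := by
              have hle1 : (n : ℝ)⁻¹ ≤ 1 := by
                rw [inv_le_one_iff₀]; right; linarith
              have : (n : ℝ)⁻¹ * Real.log N ≤ 1 * Real.log N :=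
                mul_le_mul_of_nonneg_right hle1 hlogNnn
              linarith
      linarith
    -- s bound
    have hterm1 : Real.sqrt (2 * Real.log (2 * ((k : ℝ) + 1)) / N) ≤ (Cstar - 2) * P⁻¹ := by
      have hc2 : (5 : ℝ) ≤ Cstar - 2 := by linarith
      have hP2 : P ^ 2 = (N : ℝ) ^ ((2 : ℝ) / n) := by
        rw [hPdef, ← Real.rpow_natCast ((N : ℝ) ^ ((n : ℝ)⁻¹)) 2, ← Real.rpow_mul hNpos.le]
        congr 1
        push_cast
        ring
      have hpow2n_pos : 0 < (N : ℝ) ^ ((2 : ℝ) / n) := Real.rpow_pos_of_pos hNpos _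
      have hmulpow : (N : ℝ) ^ (1 - 2 / (n : ℝ)) * (N : ℝ) ^ ((2 : ℝ) / n) = (N : ℝ) := by
        rw [← Real.rpow_add hNpos]
        norm_num
      have hcross : 2 * Real.log (2 * ((k : ℝ) + 1)) * (N : ℝ) ^ ((2 : ℝ) / n) ≤
          (Cstar - 2) ^ 2 * N := by
        calc 2 * Real.log (2 * ((k : ℝ) + 1)) * (N : ℝ) ^ ((2 : ℝ) / n)
            ≤ 25 * (N : ℝ) ^ (1 - 2 / (n : ℝ)) * (N : ℝ) ^ ((2 : ℝ) / n) :=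
              mul_le_mul_of_nonneg_right hlogbound hpow2n_pos.le
          _ = 25 * (N : ℝ) := by rw [mul_assoc, hmulpow]
          _ ≤ (Cstar - 2) ^ 2 * N := by
              have h25 : (25 : ℝ) ≤ (Cstar - 2) ^ 2 := by
                calc (25 : ℝ) = 5 ^ 2 := by norm_num
                _ ≤ (Cstar - 2) ^ 2 := pow_le_pow_left₀ (by norm_num) hc2 2
              exact mul_le_mul_of_nonneg_right h25 hNpos.le
      have hsq : 2 * Real.log (2 * ((k : ℝ) + 1)) / N ≤ ((Cstar - 2) * P⁻¹) ^ 2 := by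
        have h2 : ((Cstar - 2) * P⁻¹) ^ 2 = (Cstar - 2) ^ 2 / (N : ℝ) ^ ((2 : ℝ) / n) := by
          rw [mul_pow, inv_pow, hP2]
          exact (div_eq_mul_inv _ _).symm
        rw [h2, div_le_div_iff₀ hNpos hpow2n_pos]
        exact hcross
      calc Real.sqrt (2 * Real.log (2 * ((k : ℝ) + 1)) / N)
          ≤ Real.sqrt (((Cstar - 2) * P⁻¹) ^ 2) := Real.sqrt_le_sqrt hsq
        _ = (Cstar - 2) * P⁻¹ :=
            Real.sqrt_sq (mul_nonneg (by linarith) (by positivity))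
    have hterm2 : Real.sqrt (2 * L / N) ≤ G * E2 := by
      have hE2' : E2 = (Real.sqrt (N : ℝ))⁻¹ := by
        rw [Real.sqrt_eq_rpow, hE2def, ← Real.rpow_neg hNpos.le]
        congr 1
        norm_num
      rw [Real.sqrt_div (by positivity : (0 : ℝ) ≤ 2 * L), div_eq_mul_inv, ← hE2']
      refine mul_le_mul_of_nonneg_right ?_ hE2pos.le
      rw [hGdef]
      exact le_mul_of_one_le_left (Real.sqrt_nonneg _) hsqn1
    have hs_le : s ≤ D * ((Cstar - 2) * P⁻¹ + G * E2) := by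
      rw [hsdef]
      refine mul_le_mul_of_nonneg_left ?_ hD.le
      calc Real.sqrt (2 * Real.log (2 * ((k : ℝ) + 1) / β) / N)
          = Real.sqrt (2 * Real.log (2 * ((k : ℝ) + 1)) / N + 2 * L / N) := by
            rw [hlogsplit]; congr 1; ring
        _ ≤ Real.sqrt (2 * Real.log (2 * ((k : ℝ) + 1)) / N) + Real.sqrt (2 * L / N) :=
            aux_sqrt_add _ _ (div_nonneg (by linarith) hNpos.le) (div_nonneg (by linarith) hNpos.le)
        _ ≤ (Cstar - 2) * P⁻¹ + G * E2 := add_le_add hterm1 hterm2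
    have hdk : D / (k : ℝ) ≤ D * P⁻¹ := by
      rw [div_eq_mul_inv]
      exact mul_le_mul_of_nonneg_left (inv_anti₀ hPpos hkP) hD.le
    calc s + 2 * (D / (k : ℝ)) ≤ D * ((Cstar - 2) * P⁻¹ + G * E2) + 2 * (D * P⁻¹) := by
          linarith
      _ = D * (Cstar * P⁻¹ + G * E2) := by ring
  have hnum : (s + 2 * (D / (k : ℝ))) / α ≤ H := by
    rw [div_le_iff₀ hα0]
    calc s + 2 * (D / (k : ℝ)) ≤ D * (Cstar * P⁻¹ + G * E2) := hnete
      _ ≤ α * H := hkey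
      _ = H * α := by ring
  -- events
  have aeK : ∀ᵐ x ∂ν, x ∈ K := by
    rw [MeasureTheory.ae_iff]
    exact hKfull
  set gj : ℕ → EuclideanSpace ℝ (Fin n) → ℝ :=
    fun j x => max (h x - (m0 + (j : ℝ) * (D / (k : ℝ)))) 0 with hgjdef
  have hgjmeas : ∀ j, Measurable (gj j) := fun j =>
    (hh.sub measurable_const).max measurable_const
  have hbdj : ∀ j : ℕ, ∀ᵐ x ∂ν, gj j x ∈ Set.Icc 0 D := by
    intro j
    filter_upwards [aeK] with x hx
    refine ⟨le_max_right _ _, ?_⟩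
    have h1 := (hmM x hx).2
    have hj0 : 0 ≤ (j : ℝ) * (D / (k : ℝ)) := by positivity
    rw [hgjdef]
    simp only [max_le_iff]
    exact ⟨by linarith, hD.le⟩
  set gj' : ℕ → EuclideanSpace ℝ (Fin n) → ℝ := fun j x => D - gj j x with hgj'def
  have hgj'meas : ∀ j, Measurable (gj' j) := fun j => measurable_const.sub (hgjmeas j)
  have hbdj' : ∀ j : ℕ, ∀ᵐ x ∂ν, gj' j x ∈ Set.Icc 0 D := by
    intro j
    filter_upwards [hbdj j] with x hx
    rw [hgj'def]
    exact ⟨by simp only; linarith [hx.2], by simp only; linarith [hx.1]⟩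
  set π : Measure (Fin N → EuclideanSpace ℝ (Fin n)) := Measure.pi fun _ : Fin N => ν
    with hπdef
  set badP : ℕ → Set (Fin N → EuclideanSpace ℝ (Fin n)) :=
    fun j => {ys | (N : ℝ) * s ≤ ∑ i, (gj j (ys i) - ∫ y, gj j y ∂ν)} with hbadPdef
  set badM : ℕ → Set (Fin N → EuclideanSpace ℝ (Fin n)) :=
    fun j => {ys | (N : ℝ) * s ≤ ∑ i, (gj' j (ys i) - ∫ y, gj' j y ∂ν)} with hbadMdef
  set bad1 : Set (Fin N → EuclideanSpace ℝ (Fin n)) := {ys | ∃ i, ys i ∉ K} with hbad1def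
  set B : Set (Fin N → EuclideanSpace ℝ (Fin n)) :=
    bad1 ∪ ⋃ j ∈ Finset.range (k + 1), (badP j ∪ badM j) with hBdef
  have hexpval : Real.exp (-((N : ℝ) * s ^ 2) / (2 * D ^ 2)) = β / (2 * ((k : ℝ) + 1)) := by
    have hss : s ^ 2 = D ^ 2 * (2 * Real.log (2 * ((k : ℝ) + 1) / β) / N) := by
      rw [hsdef, mul_pow, Real.sq_sqrt (div_nonneg (by linarith) hNpos.le)]
    have harg : -((N : ℝ) * s ^ 2) / (2 * D ^ 2) = -Real.log (2 * ((k : ℝ) + 1) / β) := by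
      rw [hss]
      field_simp
    rw [harg, Real.exp_neg, Real.exp_log (by positivity), inv_div]
  have hbadP : ∀ j, π (badP j) ≤ ENNReal.ofReal (β / (2 * ((k : ℝ) + 1))) := by
    intro j
    rw [← hexpval]
    exact aux_chernoff_pi ν (hgjmeas j) hD (hbdj j) N hspos
  have hbadM : ∀ j, π (badM j) ≤ ENNReal.ofReal (β / (2 * ((k : ℝ) + 1))) := by
    intro j
    rw [← hexpval]
    exact aux_chernoff_pi ν (hgj'meas j) hD (hbdj' j) N hspos
  have hbad1 : π bad1 = 0 := by
    have h1 : bad1 = ⋃ i : Fin N, (fun ys : Fin N → EuclideanSpace ℝ (Fin n) => ys i) ⁻¹' Kᶜ := by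
      rw [hbad1def]
      ext ys
      simp
    rw [h1]
    refine measure_iUnion_null fun i => ?_
    have h2 : (fun ys : Fin N → EuclideanSpace ℝ (Fin n) => ys i) ⁻¹' Kᶜ =
        Set.pi Set.univ (Function.update
          (fun _ : Fin N => (Set.univ : Set (EuclideanSpace ℝ (Fin n)))) i Kᶜ) := by
      ext ys
      simp only [Set.mem_preimage, Set.mem_pi, Set.mem_univ, true_implies]
      constructor
      · intro hy j
        rcases eq_or_ne j i with rfl | hji
        · rwa [Function.update_self]
        · rw [Function.update_of_ne hji]
          exact Set.mem_univ _
      · intro hy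
        have := hy i
        rwa [Function.update_self] at this
    rw [hπdef, h2, Measure.pi_pi]
    exact Finset.prod_eq_zero (Finset.mem_univ i)
      (by rw [Function.update_self]; exact hKfull)
  have hBbound : π B ≤ ENNReal.ofReal β := by
    have hhalfpos : (0:ℝ) ≤ β / (2 * ((k : ℝ) + 1)) := by positivity
    have hpair : ∀ j, π (badP j ∪ badM j) ≤ ENNReal.ofReal (β / ((k : ℝ) + 1)) := by
      intro j
      calc π (badP j ∪ badM j) ≤ π (badP j) + π (badM j) := measure_union_le _ _
        _ ≤ ENNReal.ofReal (β / (2 * ((k : ℝ) + 1))) + ENNReal.ofReal (β / (2 * ((k : ℝ) + 1))) :=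
            add_le_add (hbadP j) (hbadM j)
        _ = ENNReal.ofReal (β / (2 * ((k : ℝ) + 1)) + β / (2 * ((k : ℝ) + 1))) :=
            (ENNReal.ofReal_add hhalfpos hhalfpos).symm
        _ = ENNReal.ofReal (β / ((k : ℝ) + 1)) := by
            congr 1
            field_simp
            ring
    calc π B ≤ π bad1 + π (⋃ j ∈ Finset.range (k + 1), (badP j ∪ badM j)) :=
          measure_union_le _ _
      _ = π (⋃ j ∈ Finset.range (k + 1), (badP j ∪ badM j)) := by rw [hbad1, zero_add]
      _ ≤ ∑ j ∈ Finset.range (k + 1), π (badP j ∪ badM j) := measure_biUnion_finset_le _ _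
      _ ≤ ∑ _j ∈ Finset.range (k + 1), ENNReal.ofReal (β / ((k : ℝ) + 1)) :=
          Finset.sum_le_sum fun j _ => hpair j
      _ = (k + 1) • ENNReal.ofReal (β / ((k : ℝ) + 1)) := by
          rw [Finset.sum_const, Finset.card_range]
      _ = ENNReal.ofReal β := by
          rw [nsmul_eq_mul, ← ENNReal.ofReal_natCast (k + 1),
            ← ENNReal.ofReal_mul (by positivity)]
          congr 1
          push_cast
          field_simp
  have hint_gj : ∀ j, Integrable (gj j) ν := by
    intro j
    refine aux_integrable_of_bound ν (hgjmeas j).aestronglyMeasurable (C := D) ?_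
    filter_upwards [hbdj j] with x hx
    rw [abs_of_nonneg hx.1]
    exact hx.2
  have hsubset : Bᶜ ⊆ {ys : Fin N → EuclideanSpace ℝ (Fin n) |
      |CVaR α ((empiricalMeasure ys).map h) - CVaR α (ν.map h)| ≤ H} := by
    intro ys hys
    rw [Set.mem_compl_iff, hBdef] at hys
    have h1 : ys ∉ bad1 := fun hc => hys (Set.mem_union_left _ hc)
    have h2 : ∀ j ∈ Finset.range (k + 1), ys ∉ badP j ∧ ys ∉ badM j := by
      intro j hj
      constructor
      · intro hc
        exact hys (Set.mem_union_right _ (Set.mem_biUnion hj (Set.mem_union_left _ hc)))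
      · intro hc
        exact hys (Set.mem_union_right _ (Set.mem_biUnion hj (Set.mem_union_right _ hc)))
    have hysK : ∀ i, ys i ∈ K := by
      intro i
      by_contra hi
      exact h1 ⟨i, hi⟩
    have hnet : ∀ j : ℕ, j ≤ k →
        |(N : ℝ)⁻¹ * (∑ i, max (h (ys i) - (m0 + (j : ℝ) * (D / (k : ℝ)))) 0) -
          ∫ x, max (h x - (m0 + (j : ℝ) * (D / (k : ℝ)))) 0 ∂ν| ≤ s := by
      intro j hj
      obtain ⟨hp, hm⟩ := h2 j (Finset.mem_range.2 (by omega))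
      rw [hbadPdef] at hp
      rw [hbadMdef] at hm
      simp only [Set.mem_setOf_eq, not_le] at hp hm
      have hFj' : ∫ y, gj' j y ∂ν = D - ∫ y, gj j y ∂ν := by
        rw [hgj'def]
        simp only
        rw [integral_sub (integrable_const D) (hint_gj j), integral_const]
        simp
      have hsum' : ∑ i, (gj' j (ys i) - ∫ y, gj' j y ∂ν) =
          -∑ i, (gj j (ys i) - ∫ y, gj j y ∂ν) := by
        rw [hFj', ← Finset.sum_neg_distrib]
        refine Finset.sum_congr rfl fun i _ => ?_
        rw [hgj'def]
        ring
      rw [hsum'] at hm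
      have habs : |∑ i, (gj j (ys i) - ∫ y, gj j y ∂ν)| ≤ (N : ℝ) * s := by
        rw [abs_le]
        constructor <;> linarith
      have hexpand : ∑ i, (gj j (ys i) - ∫ y, gj j y ∂ν) =
          (∑ i, gj j (ys i)) - (N : ℝ) * ∫ y, gj j y ∂ν := by
        rw [Finset.sum_sub_distrib, Finset.sum_const, Finset.card_univ, Fintype.card_fin,
          nsmul_eq_mul]
      have hkey2 : |(N : ℝ)⁻¹ * ((∑ i, gj j (ys i)) - (N : ℝ) * ∫ y, gj j y ∂ν)| ≤ s := by
        rw [abs_mul, abs_inv, Nat.abs_cast, ← hexpand]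
        calc (N : ℝ)⁻¹ * |∑ i, (gj j (ys i) - ∫ y, gj j y ∂ν)|
            ≤ (N : ℝ)⁻¹ * ((N : ℝ) * s) := mul_le_mul_of_nonneg_left habs (by positivity)
          _ = s := by field_simp
      have hshape : (N : ℝ)⁻¹ * (∑ i, max (h (ys i) - (m0 + (j : ℝ) * (D / (k : ℝ)))) 0) -
          ∫ x, max (h x - (m0 + (j : ℝ) * (D / (k : ℝ)))) 0 ∂ν =
          (N : ℝ)⁻¹ * ((∑ i, gj j (ys i)) - (N : ℝ) * ∫ y, gj j y ∂ν) := by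
        rw [hgjdef]
        simp only
        rw [mul_sub]
        congr 1
        rw [← mul_assoc, inv_mul_cancel₀ (ne_of_gt hNpos), one_mul]
      rw [hshape]
      exact hkey2
    have hdet := aux_det hN ν hh hKfull hmM hMD hD hα0 hα1 hk1 hspos.le ys hysK hnet
    rw [Set.mem_setOf_eq]
    exact hdet.trans hnum
  rw [ge_iff_le]
  calc ENNReal.ofReal (1 - β) = 1 - ENNReal.ofReal β := by
        rw [ENNReal.ofReal_sub 1 hβ0.le, ENNReal.ofReal_one]
    _ ≤ 1 - π B := tsub_le_tsub le_rfl hBbound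
    _ ≤ π Bᶜ := by
        have hle := measure_univ_le_add_compl (μ := π) B
        rw [measure_univ] at hle
        exact tsub_le_iff_right.2 (by rwa [add_comm] at hle)
    _ ≤ π {ys : Fin N → EuclideanSpace ℝ (Fin n) |
          |CVaR α ((empiricalMeasure ys).map h) - CVaR α (ν.map h)| ≤ H} :=
        measure_mono hsubset
end

section
/- Let X be a real-valued random variable with law μ of finite first moment whose cumulative distribution function F(y) = μ((−∞, y]) is continuous, and let α ∈ (0,1). Define VaR_α(μ) = inf{ y ∈ ℝ : F(y) ≥ 1 − α }. Then μ((VaR_α(μ), ∞)) = α, and the variational Conditional Value at Risk coincides with the tail expectation: inf_{t ∈ ℝ} ( t + (1/α) ∫ max(z − t, 0) dμ(z) ) = (1/α) ∫_{(VaR_α(μ), ∞)} z dμ(z). -/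
open MeasureTheory

/-- for a real distribution `μ` with finite first moment and
continuous CDF `F(y) = μ((−∞, y])`, and `α ∈ (0,1)`, the Value at Risk
`VaR_α(μ) = inf{y : F(y) ≥ 1 − α}` satisfies `μ((VaR_α, ∞)) = α`, and the
variational CVaR equals the tail expectation:
`inf_t ( t + (1/α) ∫ max(z − t, 0) dμ ) = (1/α) ∫_{(VaR_α, ∞)} z dμ`. -/
theorem cvar_eq_tail_expectation (μ : Measure ℝ) [IsProbabilityMeasure μ]
    (hInt : Integrable id μ)
    (hF : Continuous fun y : ℝ => (μ (Set.Iic y)).toReal)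
    (α : ℝ) (hα : α ∈ Set.Ioo (0 : ℝ) 1)
    (v : ℝ) (hv : v = sInf {y : ℝ | 1 - α ≤ (μ (Set.Iic y)).toReal}) :
    μ (Set.Ioi v) = ENNReal.ofReal α ∧
    (⨅ t : ℝ, (t + (1 / α) * ∫ z, max (z - t) 0 ∂μ))
      = (1 / α) * ∫ z in Set.Ioi v, z ∂μ := by
  obtain ⟨hα0, hα1⟩ := hα
  set F : ℝ → ℝ := fun y => (μ (Set.Iic y)).toReal with hFdef
  have hFcdf : F = ProbabilityTheory.cdf μ := by
    funext x
    rw [ProbabilityTheory.cdf_eq_real, measureReal_def]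
  have hmono : Monotone F := fun a b hab =>
    ENNReal.toReal_mono (measure_ne_top μ _) (measure_mono (Set.Iic_subset_Iic.2 hab))
  set S : Set ℝ := {y : ℝ | 1 - α ≤ F y} with hSdef
  have hS_ne : S.Nonempty := by
    have h1 : ∀ᶠ y in Filter.atTop, 1 - α ≤ F y := by
      rw [hFcdf]
      exact (ProbabilityTheory.tendsto_cdf_atTop μ).eventually_const_le (by linarith)
    obtain ⟨y, hy⟩ := h1.exists
    exact ⟨y, hy⟩
  have hbdd : BddBelow S := by
    have h1 : ∀ᶠ y in Filter.atBot, F y ≤ (1 - α) / 2 := by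
      rw [hFcdf]
      exact (ProbabilityTheory.tendsto_cdf_atBot μ).eventually_le_const (by linarith)
    obtain ⟨y₀, hy₀⟩ := h1.exists
    refine ⟨y₀, fun y hy => ?_⟩
    by_contra h
    push_neg at h
    have := hmono h.le
    have : (1 : ℝ) - α ≤ (1 - α) / 2 := le_trans hy (le_trans this hy₀)
    linarith
  have hclosed : IsClosed S := isClosed_le continuous_const hF
  have hvS : v ∈ S := hv ▸ hclosed.csInf_mem hS_ne hbdd
  have hFv_le : F v ≤ 1 - α := by
    by_contra h
    push_neg at h
    have hopen : IsOpen (F ⁻¹' Set.Ioi (1 - α)) := isOpen_Ioi.preimage hF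
    obtain ⟨ε, hε, hball⟩ := Metric.isOpen_iff.1 hopen v h
    have hmem : v - ε / 2 ∈ S := by
      have hb : v - ε / 2 ∈ Metric.ball v ε := by
        rw [Metric.mem_ball, Real.dist_eq,
          show v - ε / 2 - v = -(ε / 2) by ring, abs_neg, abs_of_nonneg (by linarith)]
        linarith
      have h6 : 1 - α < F (v - ε / 2) := hball hb
      exact h6.le
    have h5 : sInf S ≤ v - ε / 2 := csInf_le hbdd hmem
    rw [← hv] at h5
    linarith
  have hFv : F v = 1 - α := le_antisymm hFv_le hvS
  have hIic : μ (Set.Iic v) = ENNReal.ofReal (1 - α) := by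
    rw [← ENNReal.ofReal_toReal (measure_ne_top μ (Set.Iic v))]
    exact congrArg ENNReal.ofReal hFv
  have hIoi : μ (Set.Ioi v) = ENNReal.ofReal α := by
    have hc : μ (Set.Ioi v) = μ Set.univ - μ (Set.Iic v) := by
      rw [← Set.compl_Iic]
      exact measure_compl measurableSet_Iic (measure_ne_top μ _)
    rw [hc, hIic, measure_univ]
    rw [show (1 : ENNReal) = ENNReal.ofReal 1 by simp,
      ← ENNReal.ofReal_sub 1 (by linarith : (0:ℝ) ≤ 1 - α)]
    norm_num
  have hmeasIoi : (μ (Set.Ioi v)).toReal = α := by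
    rw [hIoi, ENNReal.toReal_ofReal hα0.le]
  refine ⟨hIoi, ?_⟩
  set T : ℝ := ∫ z in Set.Ioi v, z ∂μ with hT
  have hint_t : ∀ t : ℝ, Integrable (fun z => max (z - t) 0) μ := fun t =>
    (hInt.sub (integrable_const t)).pos_part
  have hsplit : ∀ t : ℝ, ∫ z in Set.Ioi v, (z - t) ∂μ = T - t * α := by
    intro t
    have h := integral_sub
      (hInt.integrableOn : IntegrableOn (fun z : ℝ => z) (Set.Ioi v) μ)
      ((integrable_const t).integrableOn : IntegrableOn (fun _ : ℝ => t) (Set.Ioi v) μ)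
    simp only [id_eq] at h
    rw [h, integral_const]
    simp [Measure.restrict_apply_univ, measureReal_def, hmeasIoi, hT, mul_comm]
  have hle : ∀ t : ℝ, T - t * α ≤ ∫ z, max (z - t) 0 ∂μ := by
    intro t
    rw [← hsplit t, ← integral_indicator measurableSet_Ioi]
    refine integral_mono ((hInt.sub (integrable_const t)).indicator measurableSet_Ioi)
      (hint_t t) (fun z => ?_)
    by_cases h : z ∈ Set.Ioi v
    · simp only [Set.indicator_of_mem h]
      exact le_max_left _ _
    · simp only [Set.indicator_of_notMem h]
      exact le_max_right _ _
  have glb : ∀ t : ℝ, (1 / α) * T ≤ t + (1 / α) * ∫ z, max (z - t) 0 ∂μ := by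
    intro t
    have h2 : (1 / α) * (T - t * α) ≤ (1 / α) * ∫ z, max (z - t) 0 ∂μ :=
      mul_le_mul_of_nonneg_left (hle t) (by positivity)
    have h3 : (1 / α) * T = t + (1 / α) * (T - t * α) := by
      field_simp
      ring
    linarith
  have geq : v + (1 / α) * ∫ z, max (z - v) 0 ∂μ = (1 / α) * T := by
    have heq : (fun z => max (z - v) 0) = (Set.Ioi v).indicator (fun z => z - v) := by
      funext z
      by_cases h : z ∈ Set.Ioi v
      · rw [Set.indicator_of_mem h]
        exact max_eq_left (sub_nonneg.2 (le_of_lt h))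
      · rw [Set.indicator_of_notMem h]
        exact max_eq_right (sub_nonpos.2 (not_lt.1 h))
    rw [heq, integral_indicator measurableSet_Ioi, hsplit v]
    field_simp
    ring
  refine le_antisymm ?_ (le_ciInf glb)
  have hbddr : BddBelow (Set.range fun t : ℝ => t + (1 / α) * ∫ z, max (z - t) 0 ∂μ) := by
    refine ⟨(1 / α) * T, ?_⟩
    rintro x ⟨t, rfl⟩
    exact glb t
  calc (⨅ t : ℝ, (t + (1 / α) * ∫ z, max (z - t) 0 ∂μ))
      ≤ v + (1 / α) * ∫ z, max (z - v) 0 ∂μ := ciInf_le hbddr v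
    _ = (1 / α) * T := geq
end
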